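/- For every real α with 0 ≤ α ≤ 1 and α ∉ (1/3, 1/2), the inequality 2η(α/2) − α ≤ η((1−α)/2) holds, where η(x) = −x log₂ x (with η(0)=0). -/

import Mathlib

open Matrix BigOperators Filter

noncomputable section

def swapM (d : ℕ) : Matrix (Fin d × Fin d) (Fin d × Fin d) ℂ :=
  fun p q => if p.1 = q.2 ∧ p.2 = q.1 then 1 else 0

def phiProj (d : ℕ) : Matrix (Fin d × Fin d) (Fin d × Fin d) ℂ :=
  fun p q => if p.1 = p.2 ∧ q.1 = q.2 then (d : ℂ)⁻¹ else 0

def ptB {d : ℕ} (ρ : Matrix (Fin d × Fin d) (Fin d × Fin d) ℂ) :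
    Matrix (Fin d × Fin d) (Fin d × Fin d) ℂ :=
  fun p q => ρ (p.1, q.2) (q.1, p.2)

def rhoS (d : ℕ) : Matrix (Fin d × Fin d) (Fin d × Fin d) ℂ :=
  ((d : ℂ)^2 + (d : ℂ))⁻¹ • (1 + swapM d)

def rhoA (d : ℕ) : Matrix (Fin d × Fin d) (Fin d × Fin d) ℂ :=
  ((d : ℂ)^2 - (d : ℂ))⁻¹ • (1 - swapM d)

def wernerT (d : ℕ) (θ : ℝ) : Matrix (Fin d × Fin d) (Fin d × Fin d) ℂ :=
  ((1 - θ : ℝ) : ℂ) • rhoS d + ((θ : ℝ) : ℂ) • rhoA d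

def wernerA (d : ℕ) (α : ℝ) : Matrix (Fin d × Fin d) (Fin d × Fin d) ℂ :=
  (((1 + α) / 2 : ℝ) : ℂ) • rhoS d + (((1 - α) / 2 : ℝ) : ℂ) • rhoA d

def trB {dA dB : ℕ} (ρ : Matrix (Fin dA × Fin dB) (Fin dA × Fin dB) ℂ) :
    Matrix (Fin dA) (Fin dA) ℂ :=
  fun i k => ∑ j, ρ (i, j) (k, j)

def trA {dA dB : ℕ} (ρ : Matrix (Fin dA × Fin dB) (Fin dA × Fin dB) ℂ) :
    Matrix (Fin dB) (Fin dB) ℂ :=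
  fun j l => ∑ i, ρ (i, j) (i, l)

def nlog2 (x : ℝ) : ℝ := -(x * Real.logb 2 x)

def binEnt (p : ℝ) : ℝ := nlog2 p + nlog2 (1 - p)

def vN {n : Type*} [Fintype n] [DecidableEq n] (ρ : Matrix n n ℂ) : ℝ :=
  if h : ρ.IsHermitian then ∑ i, nlog2 (h.eigenvalues i) else 0

def mutInfo {dA dB : ℕ} (ρ : Matrix (Fin dA × Fin dB) (Fin dA × Fin dB) ℂ) : ℝ :=
  vN (trB ρ) + vN (trA ρ) - vN ρ

def traceNorm {n : Type*} [Fintype n] [DecidableEq n] (X : Matrix n n ℂ) : ℝ :=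
  if h : X.IsHermitian then ∑ i, |h.eigenvalues i| else 0

def mlog {n : Type*} [Fintype n] [DecidableEq n] (A : Matrix n n ℂ) : Matrix n n ℂ :=
  if h : A.IsHermitian then
    (h.eigenvectorUnitary : Matrix n n ℂ) *
      Matrix.diagonal (fun i => ((Real.logb 2 (h.eigenvalues i) : ℝ) : ℂ)) *
      (star (h.eigenvectorUnitary : Matrix n n ℂ))
  else 0

def qRelEnt {n : Type*} [Fintype n] [DecidableEq n] (ρ σ : Matrix n n ℂ) : ℝ :=
  ((ρ * mlog ρ - ρ * mlog σ).trace).re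

def tpow {m : Type*} [Fintype m] (ρ : Matrix m m ℂ) (n : ℕ) :
    Matrix (Fin n → m) (Fin n → m) ℂ :=
  fun f g => ∏ i, ρ (f i) (g i)

def klDiv2 {ι : Type*} [Fintype ι] (p q : ι → ℝ) : ℝ :=
  ∑ i, p i * Real.logb 2 (p i / q i)

def phiVec (d : ℕ) : Fin d × Fin d → ℂ :=
  fun p => if p.1 = p.2 then (Complex.ofReal (Real.sqrt d))⁻¹ else 0

def Gfun (x : ℝ) : ℝ :=
  2*(x*Real.log x) + (1-x)*Real.log 2 - (1-x)*Real.log (1-x)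

lemma Gcont : Continuous Gfun := by
  have h1 : Continuous fun x : ℝ => x * Real.log x := Real.continuous_mul_log
  have h2 : Continuous fun x : ℝ => (1-x) * Real.log (1-x) :=
    h1.comp (continuous_const.sub continuous_id)
  exact ((continuous_const.mul h1).add
    ((continuous_const.sub continuous_id).mul continuous_const)).sub h2

lemma Gderiv {x : ℝ} (hx0 : 0 < x) (hx1 : x < 1) :
    HasDerivAt Gfun (2*Real.log x + Real.log (1-x) + 3 - Real.log 2) x := by
  have h1 : HasDerivAt (fun y : ℝ => y * Real.log y) (Real.log x + 1) x :=
    Real.hasDerivAt_mul_log hx0.ne'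
  have hs : HasDerivAt (fun y : ℝ => 1 - y) (-1) x := (hasDerivAt_id x).const_sub 1
  have h2 : HasDerivAt (fun y : ℝ => (1-y) * Real.log (1-y))
      ((Real.log (1-x) + 1) * (-1)) x := by
    have hm : HasDerivAt (fun y : ℝ => y * Real.log y) (Real.log (1-x) + 1) (1-x) :=
      Real.hasDerivAt_mul_log (by linarith)
    exact hm.comp x hs
  have h3 : HasDerivAt (fun y : ℝ => (1-y) * Real.log 2) (-1 * Real.log 2) x :=
    hs.mul_const (Real.log 2)
  have := ((h1.const_mul 2).add h3).sub h2
  exact this.congr_deriv (by ring)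

lemma Gval_third : Gfun (1/3) = 0 := by
  have h3 : Real.log ((1:ℝ)/3) = -Real.log 3 := by
    rw [one_div, Real.log_inv]
  have h23 : Real.log ((2:ℝ)/3) = Real.log 2 - Real.log 3 :=
    Real.log_div two_ne_zero three_ne_zero
  have : (1:ℝ) - 1/3 = 2/3 := by norm_num
  simp only [Gfun, this, h3, h23]
  ring

lemma Gval_half : Gfun (1/2) = 0 := by
  have h2 : Real.log ((1:ℝ)/2) = -Real.log 2 := by
    rw [one_div, Real.log_inv]
  have : (1:ℝ) - 1/2 = 1/2 := by norm_num
  simp only [Gfun, this, h2]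
  ring

lemma log_three_gt_one : (1:ℝ) < Real.log 3 := by
  rw [Real.lt_log_iff_exp_lt (by norm_num : (0:ℝ) < 3)]
  calc Real.exp 1 < 2.7182818286 := Real.exp_one_lt_d9
    _ < 3 := by norm_num

lemma G_antiOn : StrictAntiOn Gfun (Set.Icc (0:ℝ) (1/3)) := by
  apply strictAntiOn_of_deriv_neg (convex_Icc _ _) Gcont.continuousOn
  intro x hx
  rw [interior_Icc] at hx
  obtain ⟨hx0, hx13⟩ := hx
  have hx1 : x < 1 := by linarith
  rw [(Gderiv hx0 hx1).deriv]
  have hpos : 0 < x^2*(1-x) := mul_pos (pow_pos hx0 2) (by linarith)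
  have hlog : 2*Real.log x + Real.log (1-x) = Real.log (x^2*(1-x)) := by
    rw [Real.log_mul (pow_ne_zero 2 hx0.ne') (by linarith), Real.log_pow]
    push_cast; ring
  have hb : x^2*(1-x) ≤ 2/27 := by nlinarith [sq_nonneg (x - 1/3), sq_nonneg x]
  have h1 : Real.log (x^2*(1-x)) ≤ Real.log (2/27) :=
    (Real.log_le_log_iff hpos (by norm_num)).mpr hb
  have h2 : Real.log ((2:ℝ)/27) = Real.log 2 - 3 * Real.log 3 := by
    rw [Real.log_div two_ne_zero (by norm_num), show (27:ℝ) = 3^3 by norm_num,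
      Real.log_pow]
    push_cast; ring
  have := log_three_gt_one
  rw [hlog] at *
  linarith [h1, h2]

lemma G_monoOn : StrictMonoOn Gfun (Set.Icc (1/2:ℝ) (2/3)) := by
  apply strictMonoOn_of_deriv_pos (convex_Icc _ _) Gcont.continuousOn
  intro x hx
  rw [interior_Icc] at hx
  obtain ⟨hx12, hx23⟩ := hx
  have hx0 : 0 < x := by linarith
  have hx1 : x < 1 := by linarith
  rw [(Gderiv hx0 hx1).deriv]
  have hpos : (0:ℝ) < 1/8 := by norm_num
  have hlog : 2*Real.log x + Real.log (1-x) = Real.log (x^2*(1-x)) := by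
    rw [Real.log_mul (pow_ne_zero 2 hx0.ne') (by linarith), Real.log_pow]
    push_cast; ring
  have hb : 1/8 ≤ x^2*(1-x) := by nlinarith [sq_nonneg (x - 1/2)]
  have hpos2 : 0 < x^2*(1-x) := mul_pos (pow_pos hx0 2) (by linarith)
  have h1 : Real.log ((1:ℝ)/8) ≤ Real.log (x^2*(1-x)) :=
    (Real.log_le_log_iff hpos hpos2).mpr hb
  have h2 : Real.log ((1:ℝ)/8) = -(3 * Real.log 2) := by
    rw [one_div, Real.log_inv, show (8:ℝ) = 2^3 by norm_num, Real.log_pow]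
    push_cast; ring
  have := Real.log_two_lt_d9
  rw [hlog]
  linarith [h1]

lemma log_six_ge : (5:ℝ)/3 ≤ Real.log 2 + Real.log 3 := by
  have h6 : Real.log 2 + Real.log 3 = Real.log 6 := by
    rw [← Real.log_mul two_ne_zero three_ne_zero]; norm_num
  rw [h6, Real.le_log_iff_exp_le (by norm_num : (0:ℝ) < 6)]
  have hcube : Real.exp (5/3) ^ 3 = Real.exp 5 := by
    rw [← Real.exp_nat_mul]; norm_num
  have h5 : Real.exp 5 < 216 := by
    have h15 : Real.exp 5 = Real.exp 1 ^ 5 := by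
      rw [← Real.exp_nat_mul]; norm_num
    have he := Real.exp_one_lt_d9
    calc Real.exp 5 = Real.exp 1 ^ 5 := h15
      _ < 2.7182818286 ^ 5 := by
          exact pow_lt_pow_left₀ he (Real.exp_pos 1).le (by norm_num)
      _ < 216 := by norm_num
  nlinarith [Real.exp_pos (5/3 : ℝ), hcube, sq_nonneg (Real.exp (5/3) + 6),
    sq_nonneg (Real.exp (5/3) - 6)]

/-- P bound: for 2/3 ≤ x ≤ 1, x² - 1 ≤ 2 x log x. -/
lemma P_bound {x : ℝ} (hx : 2/3 ≤ x) (hx1 : x ≤ 1) :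
    x^2 - 1 ≤ 2*(x*Real.log x) := by
  set P : ℝ → ℝ := fun y => 2*(y*Real.log y) - y^2 + 1 with hP
  have hcont : Continuous P := by
    exact ((continuous_const.mul Real.continuous_mul_log).sub (continuous_pow 2)).add
      continuous_const
  have hanti : AntitoneOn P (Set.Icc (2/3:ℝ) 1) := by
    apply antitoneOn_of_deriv_nonpos (convex_Icc _ _) hcont.continuousOn
    · intro y hy
      rw [interior_Icc] at hy
      exact ((Real.hasDerivAt_mul_log (by linarith [hy.1] : y ≠ 0)).const_mul 2 |>.sub
        (hasDerivAt_pow 2 y) |>.add_const 1).differentiableAt.differentiableWithinAt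
    · intro y hy
      rw [interior_Icc] at hy
      obtain ⟨hy0, hy1⟩ := hy
      have hd : HasDerivAt P (2*(Real.log y + 1) - 2*y) y := by
        have := ((Real.hasDerivAt_mul_log (by linarith : y ≠ 0)).const_mul 2).sub
          (hasDerivAt_pow 2 y)
        have h' := this.add_const 1
        exact h'.congr_deriv (by push_cast; ring)
      rw [hd.deriv]
      have := Real.log_le_sub_one_of_pos (by linarith : (0:ℝ) < y)
      linarith
  have h1 : P 1 ≤ P x := hanti ⟨hx, hx1⟩ ⟨by norm_num, le_refl 1⟩ hx1
  simp only [hP, Real.log_one] at h1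
  nlinarith [h1]

lemma G_nonneg_high {x : ℝ} (hx : 2/3 ≤ x) (hx1 : x < 1) : 0 ≤ Gfun x := by
  have hP := P_bound hx hx1.le
  have hlb : Real.log (1-x) ≤ -Real.log 3 + 2 - 3*x := by
    have h3 : Real.log 3 + Real.log (1-x) = Real.log (3*(1-x)) :=
      (Real.log_mul three_ne_zero (by linarith)).symm
    have := Real.log_le_sub_one_of_pos (by linarith : (0:ℝ) < 3*(1-x))
    rw [← h3] at this
    linarith
  have h6 := log_six_ge
  have hge : (1-x) * (-Real.log 3 + 2 - 3*x) ≥ (1-x) * Real.log (1-x) := by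
    apply mul_le_mul_of_nonneg_left hlb (by linarith)
  simp only [Gfun]
  nlinarith [hge, hP, h6]

lemma G_nonneg (x : ℝ) (hx0 : 0 < x) (hx1 : x < 1)
    (h : x ≤ 1/3 ∨ 1/2 ≤ x) : 0 ≤ Gfun x := by
  rcases h with h | h
  · have := (G_antiOn.antitoneOn) ⟨hx0.le, h⟩ ⟨by norm_num, le_refl _⟩ h
    rw [Gval_third] at this
    exact this
  · rcases le_or_gt x (2/3) with h23 | h23
    · have := (G_monoOn.monotoneOn) ⟨le_refl _, by norm_num⟩ ⟨h, h23⟩ h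
      rw [Gval_half] at this
      exact this
    · exact G_nonneg_high h23.le hx1

theorem eta_pointwise_inequality (α : ℝ) (h0 : 0 ≤ α) (h1 : α ≤ 1)
    (h : α ≤ 1/3 ∨ 1/2 ≤ α) :
    2 * nlog2 (α/2) - α ≤ nlog2 ((1 - α)/2) := by
  have hl2 : (0:ℝ) < Real.log 2 := Real.log_pos one_lt_two
  have hhalf : Real.log ((1:ℝ)/2) = -Real.log 2 := by rw [one_div, Real.log_inv]
  rcases eq_or_lt_of_le h0 with h0' | h0'
  · rw [← h0']
    norm_num [nlog2, Real.logb, hhalf, neg_div, div_self hl2.ne']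
  rcases eq_or_lt_of_le h1 with h1' | h1'
  · rw [h1']
    norm_num [nlog2, Real.logb, hhalf, neg_div, div_self hl2.ne']
  · have hG := G_nonneg α h0' h1' h
    have hα : Real.log (α/2) = Real.log α - Real.log 2 :=
      Real.log_div h0'.ne' two_ne_zero
    have hβ : Real.log ((1-α)/2) = Real.log (1-α) - Real.log 2 :=
      Real.log_div (by linarith : (1:ℝ)-α ≠ 0) two_ne_zero
    have hkey : nlog2 ((1-α)/2) - (2 * nlog2 (α/2) - α) = Gfun α / (2*Real.log 2) := by
      simp only [nlog2, Real.logb, Gfun, hα, hβ]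
      field_simp
      ring
    have hnn : 0 ≤ Gfun α / (2*Real.log 2) :=
      div_nonneg hG (by linarith)
    linarith [hkey, hnn]

end
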